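/- Let X₁,…,X_k ∈ {0,1}² be i.i.d. 2-dimensional Bernoulli random vectors with Pr[X=(1,1)]=p, Pr[X=(1,0)]=p₁−p, Pr[X=(0,1)]=p₂−p, Pr[X=(0,0)]=1−p₁−p₂+p, where p ≥ p₁p₂ (positively correlated coordinates) and p₁k, p₂k are integers. Let S_l = ∑_{i∈[l]} (X_i − (p₁,p₂)) be the centered random walk. Then Pr[for all l ∈ [k]: S_l ≤ 0 coordinatewise] ≥ 1/(400·k^{6.5}). -/

import Mathlib

open scoped BigOperators
open MeasureTheory
open Finset


namespace RWQ

variable {k : ℕ}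

/-- Periodic indicator of a boolean word on `Fin k`. -/
def B (b : Fin k → Bool) (t : ℕ) : ℕ :=
  if h : t % k < k then (if b ⟨t % k, h⟩ then 1 else 0) else 0

/-- Prefix counts of the periodic extension. -/
def c (b : Fin k → Bool) (t : ℕ) : ℕ := ∑ i ∈ Finset.range t, B b i

/-- Cyclic rotation of a word. -/
def rot (s : ℕ) (b : Fin k → Bool) : Fin k → Bool :=
  fun i => b ⟨((i : ℕ) + s) % k, Nat.mod_lt _ i.pos⟩


lemma B_lt (b : Fin k → Bool) {t : ℕ} (ht : t < k) :
    B b t = if b ⟨t, ht⟩ then 1 else 0 := by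
  unfold B
  simp only [Nat.mod_eq_of_lt ht]
  rw [dif_pos ht]

lemma B_add_k (b : Fin k → Bool) (t : ℕ) : B b (t + k) = B b t := by
  unfold B
  rw [Nat.add_mod_right]

lemma c_add_k (b : Fin k → Bool) (t : ℕ) : c b (t + k) = c b t + c b k := by
  induction t with
  | zero => simp [c]
  | succ n ih =>
      have h : n + 1 + k = (n + k) + 1 := by omega
      rw [h]
      unfold c at *
      rw [Finset.sum_range_succ, Finset.sum_range_succ, ih, B_add_k]
      ring

lemma B_rot (hk : 0 < k) (s : ℕ) (b : Fin k → Bool) (t : ℕ) :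
    B (rot s b) t = B b (t + s) := by
  have hne : t % k < k := Nat.mod_lt _ hk
  have hne2 : (t + s) % k < k := Nat.mod_lt _ hk
  unfold B rot
  rw [dif_pos hne, dif_pos hne2]
  have h : (⟨(t % k + s) % k, Nat.mod_lt _ hk⟩ : Fin k) = (⟨(t + s) % k, hne2⟩ : Fin k) := by
    apply Fin.val_injective
    show (t % k + s) % k = (t + s) % k
    rw [Nat.mod_add_mod]
  rw [h]

lemma c_rot (hk : 0 < k) (s j : ℕ) (b : Fin k → Bool) :
    c b s + c (rot s b) j = c b (s + j) := by
  unfold c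
  rw [Finset.sum_range_add]
  congr 1
  refine Finset.sum_congr rfl fun t _ => ?_
  rw [B_rot hk, Nat.add_comm s t]

lemma rot_rot (hk : 0 < k) (s s' : ℕ) (b : Fin k → Bool) :
    rot s' (rot s b) = rot (s' + s) b := by
  funext i
  unfold rot
  congr 1
  apply Fin.val_injective
  simp only []
  show (((i : ℕ) + s') % k + s) % k = ((i : ℕ) + (s' + s)) % k
  rw [Nat.mod_add_mod, Nat.add_assoc]

lemma rot_k (hk : 0 < k) (b : Fin k → Bool) : rot k b = b := by
  funext i
  unfold rot
  congr 1
  apply Fin.val_injective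
  show ((i : ℕ) + k) % k = (i : ℕ)
  rw [Nat.add_mod_right, Nat.mod_eq_of_lt i.isLt]

lemma c_rot_k (hk : 0 < k) (s : ℕ) (b : Fin k → Bool) :
    c (rot s b) k = c b k := by
  have h1 := c_rot hk s k b
  have h2 := c_add_k b s
  omega

lemma h_period (b : Fin k → Bool) {p : ℝ} {m : ℕ} (hm : (m : ℝ) = p * k)
    (hcb : c b k = m) (t : ℕ) :
    (c b t : ℝ) - p * t = (c b (t % k) : ℝ) - p * ((t % k : ℕ) : ℝ) := by
  rcases Nat.eq_zero_or_pos k with rfl | hk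
  · simp [Nat.mod_zero]
  induction t using Nat.strong_induction_on with
  | _ t ih =>
    rcases lt_or_ge t k with h | h
    · rw [Nat.mod_eq_of_lt h]
    · have hct : c b t = c b (t - k) + c b k := by
        rw [show t = t - k + k from by omega, c_add_k]
        congr 2
        omega
      have hmod : t % k = (t - k) % k := by
        conv_lhs => rw [show t = t - k + k from by omega]
        rw [Nat.add_mod_right]
      have ihh := ih (t - k) (by omega)
      have hc : ((t - k : ℕ) : ℝ) = (t : ℝ) - k := by
        push_cast [Nat.cast_sub (by omega : k ≤ t)]; ring
      have hcbk : (c b k : ℝ) = p * k := by rw [hcb, hm]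
      rw [hct, hmod]
      push_cast
      rw [hc] at ihh
      linarith

lemma exists_good_rot (hk : 0 < k) (b : Fin k → Bool) (p : ℝ) (m : ℕ)
    (hm : (m : ℝ) = p * k) :
    ∃ s, s < k ∧ (c b k = m → ∀ j ≤ k, (c (rot s b) j : ℝ) ≤ p * j) := by
  obtain ⟨s, hs, hmax⟩ := Finset.exists_max_image (Finset.range k)
    (fun t => (c b t : ℝ) - p * t) ⟨0, Finset.mem_range.2 hk⟩
  refine ⟨s, Finset.mem_range.1 hs, fun hcb j _ => ?_⟩
  have hmax' : ∀ t : ℕ, (c b t : ℝ) - p * t ≤ (c b s : ℝ) - p * s := by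
    intro t
    rw [h_period b hm hcb t]
    exact hmax _ (Finset.mem_range.2 (Nat.mod_lt _ hk))
  have hrot := c_rot hk s j b
  have hcast : (c (rot s b) j : ℝ) = (c b (s + j) : ℝ) - (c b s : ℝ) := by
    push_cast [← hrot]; ring
  have := hmax' (s + j)
  rw [hcast]
  push_cast at this ⊢
  linarith

lemma sum_filter_lt {M : Type*} [AddCommMonoid M] {l : ℕ} (hl : l ≤ k) (g : Fin k → M) :
    ∑ i ∈ univ.filter (fun i : Fin k => (i : ℕ) < l), g i
      = ∑ t ∈ range l, (if h : t < k then g ⟨t, h⟩ else 0) := by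
  refine Finset.sum_bij' (fun (a : Fin k) _ => (a : ℕ))
    (fun t ht => (⟨t, lt_of_lt_of_le (Finset.mem_range.1 ht) hl⟩ : Fin k)) ?_ ?_ ?_ ?_ ?_
  · intro a ha
    simp only [Finset.mem_filter] at ha
    exact Finset.mem_range.2 ha.2
  · intro t ht
    simp only [Finset.mem_filter, Finset.mem_univ, true_and]
    exact Finset.mem_range.1 ht
  · intros; rfl
  · intros; rfl
  · intro a ha
    rw [dif_pos a.isLt]

lemma card_filter_lt {l : ℕ} (hl : l ≤ k) :
    (univ.filter (fun i : Fin k => (i : ℕ) < l)).card = l := by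
  classical
  rw [Finset.card_eq_sum_ones, sum_filter_lt hl]
  rw [Finset.sum_congr rfl (fun t ht => dif_pos (lt_of_lt_of_le (Finset.mem_range.1 ht) hl))]
  simp

lemma cnt_eq_c {l : ℕ} (hl : l ≤ k) (b : Fin k → Bool) :
    ∑ i ∈ univ.filter (fun i : Fin k => (i : ℕ) < l), (if b i then (1 : ℕ) else 0) = c b l := by
  rw [sum_filter_lt hl]
  refine (Finset.sum_congr rfl fun t ht => ?_).symm
  have htk : t < k := lt_of_lt_of_le (Finset.mem_range.1 ht) hl
  rw [B_lt b htk, dif_pos htk]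

lemma realsum_eq {p : ℝ} {l : ℕ} (hl : l ≤ k) (b : Fin k → Bool) :
    ∑ i ∈ univ.filter (fun i : Fin k => (i : ℕ) < l), ((if b i then (1 : ℝ) else 0) - p)
      = (c b l : ℝ) - p * l := by
  rw [Finset.sum_sub_distrib, Finset.sum_const, card_filter_lt hl]
  congr 1
  · rw [← cnt_eq_c hl b]
    push_cast
    refine Finset.sum_congr rfl fun i _ => ?_
    split <;> simp
  · rw [nsmul_eq_mul]; ring

lemma c_k_eq_card (b : Fin k → Bool) :
    c b k = (univ.filter (fun i => b i)).card := by
  have h : c b k = ∑ i : Fin k, B b (i : ℕ) :=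
    (Fin.sum_univ_eq_sum_range (fun t => B b t) k).symm
  rw [Finset.card_filter, h]
  refine Finset.sum_congr rfl fun i _ => ?_
  rw [B_lt b i.isLt]

lemma card_T (m : ℕ) :
    (univ.filter (fun b : Fin k → Bool => c b k = m)).card = k.choose m := by
  have h : k.choose m = (Finset.powersetCard m (univ : Finset (Fin k))).card := by
    rw [Finset.card_powersetCard, Finset.card_univ, Fintype.card_fin]
  rw [h]
  apply Finset.card_bij (fun b _ => univ.filter (fun i => b i))
  · intro b hb
    simp only [Finset.mem_filter, Finset.mem_univ, true_and] at hb
    rw [Finset.mem_powersetCard]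
    exact ⟨Finset.filter_subset _ _, by rw [← c_k_eq_card, hb]⟩
  · intro b hb b' hb' hf
    funext i
    have := congrArg (fun s => i ∈ s) hf
    simp only [Finset.mem_filter, Finset.mem_univ, true_and, eq_iff_iff] at this
    exact Bool.eq_iff_iff.2 this
  · intro st hst
    rw [Finset.mem_powersetCard] at hst
    refine ⟨fun i => decide (i ∈ st), ?_, ?_⟩
    · simp only [Finset.mem_filter, Finset.mem_univ, true_and]
      rw [c_k_eq_card]
      have : (univ.filter (fun i => decide (i ∈ st))) = st := by
        ext i; simp
      rw [this, hst.2]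
    · ext i; simp

lemma weight_eq (p : ℝ) (b : Fin k → Bool) :
    ∏ i, (if b i then p else 1 - p) = p ^ (c b k) * (1 - p) ^ (k - c b k) := by
  rw [Finset.prod_ite (fun _ => p) (fun _ => 1 - p), Finset.prod_const, Finset.prod_const,
    c_k_eq_card]
  have h := Finset.card_filter_add_card_filter_not
    (s := (univ : Finset (Fin k))) (p := fun i => b i = true)
  rw [Finset.card_univ, Fintype.card_fin] at h
  congr 2
  omega

lemma card_le_rot (hk : 0 < k) (p : ℝ) (m : ℕ) (hm : (m : ℝ) = p * k) :
    (univ.filter (fun b : Fin k → Bool => c b k = m)).card ≤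
      k * (univ.filter (fun b : Fin k → Bool =>
        c b k = m ∧ ∀ j ≤ k, (c b j : ℝ) ≤ p * j)).card := by
  classical
  have hsel : ∀ b : Fin k → Bool, ∃ s, s < k ∧ (c b k = m → ∀ j ≤ k, (c (rot s b) j : ℝ) ≤ p * j) :=
    fun b => exists_good_rot hk b p m hm
  choose sel hsel1 hsel2 using hsel
  set V := univ.filter (fun b : Fin k → Bool =>
    c b k = m ∧ ∀ j ≤ k, (c b j : ℝ) ≤ p * j) with hV
  have hmaps : ∀ b ∈ univ.filter (fun b : Fin k → Bool => c b k = m),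
      ((⟨sel b, hsel1 b⟩ : Fin k), rot (sel b) b) ∈ (univ : Finset (Fin k)) ×ˢ V := by
    intro b hb
    simp only [Finset.mem_filter, Finset.mem_univ, true_and] at hb
    refine Finset.mem_product.2 ⟨Finset.mem_univ _, ?_⟩
    simp only [hV, Finset.mem_filter, Finset.mem_univ, true_and]
    exact ⟨by rw [c_rot_k hk, hb], hsel2 b hb⟩
  have hinj : Set.InjOn (fun b : Fin k → Bool => ((⟨sel b, hsel1 b⟩ : Fin k), rot (sel b) b))
      (univ.filter (fun b : Fin k → Bool => c b k = m)) := by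
    intro b hb b' hb' heq
    simp only [Prod.mk.injEq, Fin.mk.injEq] at heq
    obtain ⟨hs, hr⟩ := heq
    have h1 : rot (k - sel b) (rot (sel b) b) = rot (k - sel b) (rot (sel b) b') := by
      rw [hr, hs]
    rw [rot_rot hk, rot_rot hk] at h1
    have hsk : k - sel b + sel b = k := by have := hsel1 b; omega
    rw [hsk, rot_k hk, rot_k hk] at h1
    exact h1
  calc (univ.filter (fun b : Fin k → Bool => c b k = m)).card
      ≤ ((univ : Finset (Fin k)) ×ˢ V).card := Finset.card_le_card_of_injOn _ hmaps hinj
    _ = k * V.card := by rw [Finset.card_product, Finset.card_univ, Fintype.card_fin]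

lemma mode_bound (k m : ℕ) (p : ℝ) (hp0 : 0 ≤ p) (hp1 : p ≤ 1)
    (hm : (m : ℝ) = p * k) :
    1 ≤ ((k : ℝ) + 1) * ((k.choose m : ℝ) * p ^ m * (1 - p) ^ (k - m)) := by
  set f : ℕ → ℝ := fun j => (k.choose j : ℝ) * p ^ j * (1 - p) ^ (k - j) with hf
  have hq0 : (0:ℝ) ≤ 1 - p := by linarith
  have hfnn : ∀ j, 0 ≤ f j := fun j =>
    mul_nonneg (mul_nonneg (Nat.cast_nonneg _) (pow_nonneg hp0 _)) (pow_nonneg hq0 _)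
  have hmk : m ≤ k := by
    have h1 : (m : ℝ) ≤ (k : ℝ) := by
      rw [hm]; nlinarith [Nat.cast_nonneg (α := ℝ) k]
    exact_mod_cast h1
  -- the key choose identity, real version
  have key : ∀ j, j < k →
      f (j + 1) * ((j + 1 : ℝ) * (1 - p)) = f j * (((k : ℝ) - j) * p) := by
    intro j hjk
    have hc : ((k.choose (j+1) : ℝ)) * ((j:ℝ) + 1) = (k.choose j : ℝ) * ((k : ℝ) - j) := by
      have := Nat.choose_succ_right_eq k j
      have h2 : ((k.choose (j+1) * (j+1) : ℕ) : ℝ) = ((k.choose j * (k - j) : ℕ) : ℝ) := by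
        exact_mod_cast congrArg (Nat.cast (R := ℝ)) this
      push_cast [Nat.cast_sub hjk.le] at h2
      linarith
    have hkj : k - j = (k - (j+1)) + 1 := by omega
    simp only [hf]
    rw [hkj, pow_succ, pow_succ]
    linear_combination (p ^ j * p * (1 - p) ^ (k - (j + 1)) * (1 - p)) * hc
  have step_up : ∀ j, j + 1 ≤ m → f j ≤ f (j + 1) := by
    intro j hj
    have hjk : j < k := lt_of_lt_of_le (by omega) hmk
    by_cases hp' : p = 1
    · have : f j = 0 := by
        simp only [hf]
        rw [hp']
        have : (1:ℝ) - 1 = 0 := by ring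
        rw [this, zero_pow (by omega : k - j ≠ 0)]
        ring
      rw [this]; exact hfnn _
    · have hq : 0 < 1 - p := lt_of_le_of_ne hq0 (fun h => hp' (by linarith))
      have hineq : ((j:ℝ) + 1) * (1 - p) ≤ ((k:ℝ) - j) * p := by
        have hjm : (j : ℝ) + 1 ≤ m := by exact_mod_cast hj
        nlinarith [hm]
      have hkey := key j hjk
      have hpos : (0:ℝ) < ((j:ℝ) + 1) * (1 - p) := by positivity
      have := mul_le_mul_of_nonneg_left hineq (hfnn j)
      rw [← hkey] at this
      exact le_of_mul_le_mul_right (by linarith [this]) hpos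
  have step_down : ∀ j, m ≤ j → f (j + 1) ≤ f j := by
    intro j hj
    by_cases hjk : k ≤ j
    · have : f (j+1) = 0 := by
        simp only [hf]
        rw [Nat.choose_eq_zero_of_lt (by omega)]
        simp
      rw [this]; exact hfnn _
    · push_neg at hjk
      have hp' : p < 1 := by
        rcases lt_or_ge p 1 with h | h
        · exact h
        · exfalso
          have : p = 1 := le_antisymm hp1 h
          rw [this, one_mul] at hm
          have : m = k := by exact_mod_cast hm
          omega
      have hq : 0 < 1 - p := by linarith
      have hineq : ((k:ℝ) - j) * p ≤ ((j:ℝ) + 1) * (1 - p) := by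
        have hjm : (m : ℝ) ≤ j := by exact_mod_cast hj
        nlinarith [hm]
      have hkey := key j hjk
      have hpos : (0:ℝ) < ((j:ℝ) + 1) * (1 - p) := by positivity
      have h2 : f (j+1) * (((j:ℝ) + 1) * (1 - p)) ≤ f j * (((j:ℝ) + 1) * (1 - p)) := by
        rw [hkey]
        exact mul_le_mul_of_nonneg_left hineq (hfnn j)
      exact le_of_mul_le_mul_right h2 hpos
  have hup : ∀ d, f (m - d) ≤ f m := by
    intro d
    induction d with
    | zero => simp
    | succ n ih =>
        by_cases hd : m ≤ n
        · rw [show m - (n+1) = m - n from by omega]; exact ih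
        · push_neg at hd
          have h1 : f (m - (n+1)) ≤ f (m - (n+1) + 1) := step_up _ (by omega)
          rw [show m - (n+1) + 1 = m - n from by omega] at h1
          exact h1.trans ih
  have hdown : ∀ j, m ≤ j → f j ≤ f m := by
    intro j hj
    induction j, hj using Nat.le_induction with
    | base => exact le_refl _
    | succ n hn ih => exact (step_down n hn).trans ih
  have hall : ∀ j, f j ≤ f m := by
    intro j
    rcases le_or_gt j m with h | h
    · have := hup (m - j)
      rwa [show m - (m - j) = j from by omega] at this
    · exact hdown j h.le
  have hsum : (1:ℝ) = ∑ j ∈ range (k+1), f j := by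
    have h1 : (1:ℝ) = (p + (1 - p)) ^ k := by norm_num
    rw [h1, add_pow]
    refine Finset.sum_congr rfl fun j _ => ?_
    simp only [hf]
    ring
  have hle : ∑ j ∈ range (k+1), f j ≤ (k+1 : ℝ) * f m := by
    calc ∑ j ∈ range (k+1), f j ≤ ∑ _j ∈ range (k+1), f m :=
          Finset.sum_le_sum fun j _ => hall j
      _ = (k+1 : ℝ) * f m := by
          rw [Finset.sum_const, card_range, nsmul_eq_mul]
          push_cast
          ring
  calc (1:ℝ) = ∑ j ∈ range (k+1), f j := hsum
    _ ≤ (k+1 : ℝ) * f m := hle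
    _ = ((k:ℝ) + 1) * ((k.choose m : ℝ) * p ^ m * (1 - p) ^ (k - m)) := by simp [hf]

open scoped Classical in
lemma onedim (k : ℕ) (hk : 0 < k) (p : ℝ) (hp0 : 0 ≤ p) (hp1 : p ≤ 1)
    (m : ℕ) (hm : (m : ℝ) = p * k) :
    1 / (2 * (k : ℝ) ^ 2) ≤
      ∑ b ∈ univ.filter (fun b : Fin k → Bool =>
        ∀ l, 1 ≤ l → l ≤ k →
          (∑ i ∈ univ.filter (fun i : Fin k => (i : ℕ) < l),
            ((if b i then (1:ℝ) else 0) - p)) ≤ 0),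
      ∏ i, (if b i then p else 1 - p) := by
  classical
  have hq0 : (0:ℝ) ≤ 1 - p := by linarith
  have hmk : m ≤ k := by
    have h1 : (m : ℝ) ≤ (k : ℝ) := by
      rw [hm]; nlinarith [Nat.cast_nonneg (α := ℝ) k]
    exact_mod_cast h1
  set wt : ℝ := p ^ m * (1 - p) ^ (k - m) with hwt
  have hwt0 : 0 ≤ wt := mul_nonneg (pow_nonneg hp0 _) (pow_nonneg hq0 _)
  set V := univ.filter (fun b : Fin k → Bool =>
    c b k = m ∧ ∀ j ≤ k, (c b j : ℝ) ≤ p * j) with hV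
  set A := univ.filter (fun b : Fin k → Bool =>
    ∀ l, 1 ≤ l → l ≤ k →
      (∑ i ∈ univ.filter (fun i : Fin k => (i : ℕ) < l),
        ((if b i then (1:ℝ) else 0) - p)) ≤ 0) with hA
  have hVA : V ⊆ A := by
    intro b hb
    simp only [hV, Finset.mem_filter, Finset.mem_univ, true_and] at hb
    simp only [hA, Finset.mem_filter, Finset.mem_univ, true_and]
    intro l _ hlk
    rw [realsum_eq hlk]
    have := hb.2 l hlk
    linarith
  have hwnn : ∀ b : Fin k → Bool, 0 ≤ ∏ i, (if b i then p else 1 - p) := by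
    intro b
    apply Finset.prod_nonneg
    intro i _
    split <;> [exact hp0; exact hq0]
  have hsub : ∑ b ∈ V, ∏ i, (if b i then p else 1 - p)
      ≤ ∑ b ∈ A, ∏ i, (if b i then p else 1 - p) :=
    Finset.sum_le_sum_of_subset_of_nonneg hVA (fun b _ _ => hwnn b)
  have hVsum : ∑ b ∈ V, ∏ i, (if b i then p else 1 - p) = (V.card : ℝ) * wt := by
    rw [Finset.sum_congr rfl (fun b hb => ?_), Finset.sum_const, nsmul_eq_mul]
    simp only [hV, Finset.mem_filter] at hb
    rw [weight_eq, hb.2.1]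
  have hcard : (k.choose m : ℝ) ≤ (k : ℝ) * V.card := by
    have := card_le_rot hk p m hm
    rw [card_T] at this
    exact_mod_cast this
  have hmode := mode_bound k m p hp0 hp1 hm
  have hk1 : (1:ℝ) ≤ (k : ℝ) := by exact_mod_cast hk
  have e1 : ((k:ℝ) + 1) * ((k.choose m : ℝ) * wt) ≤ ((k:ℝ) + 1) * (((k:ℝ) * V.card) * wt) := by
    apply mul_le_mul_of_nonneg_left _ (by positivity)
    exact mul_le_mul_of_nonneg_right hcard hwt0
  have e2 : ((k:ℝ) + 1) * (((k:ℝ) * V.card) * wt) ≤ (2 * (k:ℝ)) * (((k:ℝ) * V.card) * wt) := by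
    apply mul_le_mul_of_nonneg_right (by linarith)
    positivity
  have hmode' : 1 ≤ ((k:ℝ) + 1) * ((k.choose m : ℝ) * wt) := by
    calc (1:ℝ) ≤ ((k : ℝ) + 1) * ((k.choose m : ℝ) * p ^ m * (1 - p) ^ (k - m)) := hmode
      _ = ((k:ℝ) + 1) * ((k.choose m : ℝ) * wt) := by rw [hwt]; ring
  have hfinal : 1 ≤ 2 * (k:ℝ)^2 * ((V.card : ℝ) * wt) := by
    have h3 : (2 * (k:ℝ)) * (((k:ℝ) * V.card) * wt) = 2 * (k:ℝ)^2 * ((V.card : ℝ) * wt) := by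
      ring
    linarith [hmode'.trans (e1.trans e2), h3.symm.le]
  rw [div_le_iff₀ (by positivity)]
  calc (1:ℝ) ≤ 2 * (k:ℝ)^2 * ((V.card : ℝ) * wt) := hfinal
    _ = ((V.card : ℝ) * wt) * (2 * (k:ℝ)^2) := by ring
    _ ≤ (∑ b ∈ A, ∏ i, (if b i then p else 1 - p)) * (2 * (k:ℝ)^2) := by
        apply mul_le_mul_of_nonneg_right _ (by positivity)
        rw [← hVsum]
        exact hsub

lemma marg_fst (k : ℕ) (q : Bool × Bool → ℝ) (F : (Fin k → Bool) → ℝ) :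
    ∑ ω : Fin k → Bool × Bool, F (fun i => (ω i).1) * ∏ i, q (ω i)
      = ∑ b : Fin k → Bool, F b * ∏ i, (q (b i, true) + q (b i, false)) := by
  classical
  rw [← Equiv.sum_comp (Equiv.arrowProdEquivProdArrow (Fin k) (fun _ => Bool) (fun _ => Bool)).symm
    (fun ω => F (fun i => (ω i).1) * ∏ i, q (ω i))]
  rw [Fintype.sum_prod_type]
  refine Finset.sum_congr rfl fun b _ => ?_
  have h1 : ∀ c : Fin k → Bool,
      (Equiv.arrowProdEquivProdArrow (Fin k) (fun _ => Bool) (fun _ => Bool)).symm (b, c) = fun i => (b i, c i) := by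
    intro c; rfl
  simp only [h1]
  rw [← Finset.mul_sum]
  congr 1
  have h2 : ∀ i : Fin k, q (b i, true) + q (b i, false) = ∑ x : Bool, q (b i, x) := by
    intro i; rw [Fintype.sum_bool]
  rw [Finset.prod_congr rfl (fun i _ => h2 i), Finset.prod_univ_sum]
  rw [Fintype.piFinset_univ]

lemma marg_snd (k : ℕ) (q : Bool × Bool → ℝ) (F : (Fin k → Bool) → ℝ) :
    ∑ ω : Fin k → Bool × Bool, F (fun i => (ω i).2) * ∏ i, q (ω i)
      = ∑ b : Fin k → Bool, F b * ∏ i, (q (true, b i) + q (false, b i)) := by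
  classical
  rw [← Equiv.sum_comp (Equiv.arrowProdEquivProdArrow (Fin k) (fun _ => Bool) (fun _ => Bool)).symm
    (fun ω => F (fun i => (ω i).2) * ∏ i, q (ω i))]
  rw [Fintype.sum_prod_type]
  rw [Finset.sum_comm]
  refine Finset.sum_congr rfl fun c _ => ?_
  have h1 : ∀ b : Fin k → Bool,
      (Equiv.arrowProdEquivProdArrow (Fin k) (fun _ => Bool) (fun _ => Bool)).symm (b, c) = fun i => (b i, c i) := by
    intro b; rfl
  simp only [h1]
  rw [← Finset.mul_sum]
  congr 1
  have h2 : ∀ i : Fin k, q (true, c i) + q (false, c i) = ∑ x : Bool, q (x, c i) := by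
    intro i; rw [Fintype.sum_bool]
  rw [Finset.prod_congr rfl (fun i _ => h2 i), Finset.prod_univ_sum]
  rw [Fintype.piFinset_univ]

lemma total_mass (k : ℕ) (q : Bool × Bool → ℝ) :
    ∑ ω : Fin k → Bool × Bool, ∏ i, q (ω i) = (∑ x : Bool × Bool, q x) ^ k := by
  classical
  calc ∑ ω : Fin k → Bool × Bool, ∏ i, q (ω i)
      = ∑ ω ∈ Fintype.piFinset (fun _ : Fin k => (univ : Finset (Bool × Bool))),
          ∏ i, q (ω i) := by rw [Fintype.piFinset_univ]
    _ = ∏ _i : Fin k, ∑ x ∈ (univ : Finset (Bool × Bool)), q x :=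
        (Finset.prod_univ_sum _ _).symm
    _ = (∑ x : Bool × Bool, q x) ^ k := by
        rw [Finset.prod_const, Finset.card_univ, Fintype.card_fin]

lemma prod_supermod (k : ℕ) (q : Bool × Bool → ℝ) (hq0 : ∀ x, 0 ≤ q x)
    (hsup : ∀ x y : Bool × Bool, q x * q y ≤ q (x ⊓ y) * q (x ⊔ y))
    (a b : Fin k → Bool × Bool) :
    (∏ i, q (a i)) * (∏ i, q (b i)) ≤ (∏ i, q ((a ⊓ b) i)) * (∏ i, q ((a ⊔ b) i)) := by
  rw [← Finset.prod_mul_distrib, ← Finset.prod_mul_distrib]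
  apply Finset.prod_le_prod
  · intro i _; exact mul_nonneg (hq0 _) (hq0 _)
  · intro i _
    exact hsup (a i) (b i)

lemma fkg_dual (k : ℕ) (q : Bool × Bool → ℝ) (hq0 : ∀ x, 0 ≤ q x)
    (hsup : ∀ x y : Bool × Bool, q x * q y ≤ q (x ⊓ y) * q (x ⊔ y))
    (f g : (Fin k → Bool × Bool) → ℝ) (hf0 : ∀ ω, 0 ≤ f ω) (hg0 : ∀ ω, 0 ≤ g ω)
    (hf : ∀ a b : Fin k → Bool × Bool, a ≤ b → f b ≤ f a)
    (hg : ∀ a b : Fin k → Bool × Bool, a ≤ b → g b ≤ g a) :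
    (∑ ω : Fin k → Bool × Bool, (∏ i, q (ω i)) * f ω)
        * (∑ ω : Fin k → Bool × Bool, (∏ i, q (ω i)) * g ω)
      ≤ (∑ ω : Fin k → Bool × Bool, ∏ i, q (ω i))
        * ∑ ω : Fin k → Bool × Bool, (∏ i, q (ω i)) * (f ω * g ω) := by
  have := fkg (α := (Fin k → Bool × Bool)ᵒᵈ) (β := ℝ)
    (fun a => f (OrderDual.ofDual a)) (fun a => g (OrderDual.ofDual a))
    (fun a => ∏ i, q (OrderDual.ofDual a i))
    (fun a => Finset.prod_nonneg fun i _ => hq0 _)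
    (fun a => hf0 _) (fun a => hg0 _)
    (fun a b hab => hf _ _ hab)
    (fun a b hab => hg _ _ hab)
    (fun a b => ?_)
  · exact this
  · rw [mul_comm ((∏ i, q (OrderDual.ofDual (a ⊓ b) i))) _]
    exact prod_supermod k q hq0 hsup (OrderDual.ofDual a) (OrderDual.ofDual b)

open scoped Classical in
lemma measure_eq (k : ℕ) (μ : Measure (Bool × Bool)) [IsProbabilityMeasure μ]
    (q : Bool × Bool → ℝ) (hq0 : ∀ x, 0 ≤ q x) (hq : ∀ x, μ {x} = ENNReal.ofReal (q x))
    (S : Set (Fin k → Bool × Bool)) :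
    (Measure.pi fun _ => μ) S
      = ENNReal.ofReal (∑ ω ∈ univ.filter (· ∈ S), ∏ i, q (ω i)) := by
  set T := univ.filter (· ∈ S) with hT
  have hSeq : S = ⋃ ω ∈ T, ({ω} : Set (Fin k → Bool × Bool)) := by
    ext x; simp [hT]
  rw [show (Measure.pi fun _ => μ) S
      = (Measure.pi fun _ => μ) (⋃ ω ∈ T, ({ω} : Set (Fin k → Bool × Bool))) from by
    rw [← hSeq]]
  rw [measure_biUnion_finset]
  · rw [ENNReal.ofReal_sum_of_nonneg (fun ω _ => Finset.prod_nonneg fun i _ => hq0 _)]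
    refine Finset.sum_congr rfl fun ω _ => ?_
    rw [← Set.univ_pi_singleton ω, Measure.pi_pi]
    rw [ENNReal.ofReal_prod_of_nonneg (fun i _ => hq0 _)]
    exact Finset.prod_congr rfl fun i _ => hq (ω i)
  · intro x _ y _ hxy
    simp [Set.disjoint_singleton_left, hxy]
  · intro ω _
    exact measurableSet_singleton ω

end RWQ

set_option maxHeartbeats 1000000 in
/-- The probability that a centered i.i.d. Bernoulli-`2d` random walk (with positively
correlated coordinates, `p ≥ p₁p₂`, and `p₁k, p₂k ∈ ℤ`) stays coordinatewise at most `0`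
at every step `l ∈ [k]` is at least `1/(400·k^{6.5})`. -/
theorem random_walk_stays_in_quadrant
    (k : ℕ) (hk : 0 < k) (p p₁ p₂ : ℝ)
    (hp1 : p₁ ∈ Set.Icc (0:ℝ) 1) (hp2 : p₂ ∈ Set.Icc (0:ℝ) 1) (hp : p ∈ Set.Icc (0:ℝ) 1)
    (hp1k : ∃ m : ℕ, (m : ℝ) = p₁ * k)
    (hp2k : ∃ m : ℕ, (m : ℝ) = p₂ * k)
    (hcorr : p₁ * p₂ ≤ p)
    (hpp1 : p ≤ p₁) (hpp2 : p ≤ p₂) (hp22 : 0 ≤ 1 - p₁ - p₂ + p)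
    (μ : Measure (Bool × Bool)) [IsProbabilityMeasure μ]
    (h11 : μ {(true, true)} = ENNReal.ofReal p)
    (h10 : μ {(true, false)} = ENNReal.ofReal (p₁ - p))
    (h01 : μ {(false, true)} = ENNReal.ofReal (p₂ - p))
    (h00 : μ {(false, false)} = ENNReal.ofReal (1 - p₁ - p₂ + p)) :
    ENNReal.ofReal (1 / (400 * (k : ℝ) ^ (6.5 : ℝ)))
      ≤ (Measure.pi fun _ : Fin k => μ)
          {ω | ∀ l, 1 ≤ l → l ≤ k →
              (∑ i ∈ Finset.univ.filter (fun i : Fin k => (i : ℕ) < l),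
                  ((if (ω i).1 then (1:ℝ) else 0) - p₁)) ≤ 0
            ∧ (∑ i ∈ Finset.univ.filter (fun i : Fin k => (i : ℕ) < l),
                  ((if (ω i).2 then (1:ℝ) else 0) - p₂)) ≤ 0} := by
  classical
  obtain ⟨hp10, hp11⟩ := hp1
  obtain ⟨hp20, hp21⟩ := hp2
  obtain ⟨hp0, hpu⟩ := hp
  obtain ⟨m₁, hm₁⟩ := hp1k
  obtain ⟨m₂, hm₂⟩ := hp2k
  set q : Bool × Bool → ℝ := fun x =>
    if x.1 then (if x.2 then p else p₁ - p) else (if x.2 then p₂ - p else 1 - p₁ - p₂ + p)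
    with hqdef
  have hq0 : ∀ x, 0 ≤ q x := by
    rintro ⟨x1, x2⟩
    cases x1 <;> cases x2 <;> simp [hqdef] <;> nlinarith
  have hqμ : ∀ x, μ {x} = ENNReal.ofReal (q x) := by
    rintro ⟨x1, x2⟩
    cases x1 <;> cases x2 <;> simpa [hqdef] using (by assumption)
  have hsup : ∀ x y : Bool × Bool, q x * q y ≤ q (x ⊓ y) * q (x ⊔ y) := by
    rintro ⟨x1, x2⟩ ⟨y1, y2⟩
    cases x1 <;> cases x2 <;> cases y1 <;> cases y2 <;>
      simp [hqdef, Prod.inf_def, Prod.sup_def] <;> nlinarith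
  have hqsum : ∑ x : Bool × Bool, q x = 1 := by
    rw [Fintype.sum_prod_type]
    simp [hqdef, Fintype.sum_bool]
  -- notation
  set w : (Fin k → Bool × Bool) → ℝ := fun ω => ∏ i, q (ω i) with hwdef
  have hw0 : ∀ ω, 0 ≤ w ω := fun ω => Finset.prod_nonneg fun i _ => hq0 _
  set A₁ : (Fin k → Bool) → Prop := fun b => ∀ l, 1 ≤ l → l ≤ k →
      (∑ i ∈ Finset.univ.filter (fun i : Fin k => (i : ℕ) < l),
        ((if b i then (1:ℝ) else 0) - p₁)) ≤ 0 with hA₁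
  set A₂ : (Fin k → Bool) → Prop := fun b => ∀ l, 1 ≤ l → l ≤ k →
      (∑ i ∈ Finset.univ.filter (fun i : Fin k => (i : ℕ) < l),
        ((if b i then (1:ℝ) else 0) - p₂)) ≤ 0 with hA₂
  set f : (Fin k → Bool × Bool) → ℝ := fun ω => if A₁ (fun i => (ω i).1) then 1 else 0
    with hfdef
  set g : (Fin k → Bool × Bool) → ℝ := fun ω => if A₂ (fun i => (ω i).2) then 1 else 0
    with hgdef
  have hf0 : ∀ ω, 0 ≤ f ω := by intro ω; rw [hfdef]; dsimp only; split <;> norm_num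
  have hg0 : ∀ ω, 0 ≤ g ω := by intro ω; rw [hgdef]; dsimp only; split <;> norm_num
  -- antitonicity
  have hsum_mono : ∀ (u v : Fin k → Bool) (r : ℝ), (∀ i, u i ≤ v i) → ∀ l : ℕ,
      (∑ i ∈ Finset.univ.filter (fun i : Fin k => (i : ℕ) < l), ((if u i then (1:ℝ) else 0) - r))
        ≤ ∑ i ∈ Finset.univ.filter (fun i : Fin k => (i : ℕ) < l),
            ((if v i then (1:ℝ) else 0) - r) := by
    intro u v r huv l
    apply Finset.sum_le_sum
    intro i _
    have h := huv i
    have hle : (if u i then (1:ℝ) else 0) ≤ (if v i then (1:ℝ) else 0) := by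
      cases hu : u i
      · cases hv : v i <;> norm_num
      · have hv : v i = true := by
          cases hvv : v i
          · rw [hu, hvv] at h; exact absurd h (by norm_num)
          · rfl
        rw [hv]
    linarith
  have hfmono : ∀ a b : Fin k → Bool × Bool, a ≤ b → f b ≤ f a := by
    intro a b hab
    rw [hfdef]
    dsimp only
    have himp : A₁ (fun i => (b i).1) → A₁ (fun i => (a i).1) := by
      intro h l h1 h2
      exact le_trans (hsum_mono _ _ p₁ (fun i => (hab i).1) l) (h l h1 h2)
    split
    · next hbt => rw [if_pos (himp hbt)]
    · split <;> norm_num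
  have hgmono : ∀ a b : Fin k → Bool × Bool, a ≤ b → g b ≤ g a := by
    intro a b hab
    rw [hgdef]
    dsimp only
    have himp : A₂ (fun i => (b i).2) → A₂ (fun i => (a i).2) := by
      intro h l h1 h2
      exact le_trans (hsum_mono _ _ p₂ (fun i => (hab i).2) l) (h l h1 h2)
    split
    · next hbt => rw [if_pos (himp hbt)]
    · split <;> norm_num
  -- total mass 1
  have htot : ∑ ω : Fin k → Bool × Bool, w ω = 1 := by
    rw [hwdef]
    dsimp only
    rw [RWQ.total_mass k q, hqsum, one_pow]
  -- marginals
  have hmarg1 : 1 / (2 * (k:ℝ)^2) ≤ ∑ ω : Fin k → Bool × Bool, w ω * f ω := by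
    have e1 : ∑ ω : Fin k → Bool × Bool, w ω * f ω
        = ∑ ω : Fin k → Bool × Bool,
            (fun b => if A₁ b then (1:ℝ) else 0) (fun i => (ω i).1) * ∏ i, q (ω i) := by
      refine Finset.sum_congr rfl fun ω _ => ?_
      rw [hwdef, hfdef]
      dsimp only
      ring
    rw [e1, RWQ.marg_fst k q (fun b => if A₁ b then (1:ℝ) else 0)]
    have e2 : ∀ b : Fin k → Bool,
        (∏ i, (q (b i, true) + q (b i, false))) = ∏ i, (if b i then p₁ else 1 - p₁) := by
      intro b
      refine Finset.prod_congr rfl fun i _ => ?_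
      cases hb : b i <;> simp [hqdef, hb] <;> ring
    calc 1 / (2 * (k:ℝ)^2)
        ≤ ∑ b ∈ Finset.univ.filter (fun b : Fin k → Bool =>
            ∀ l, 1 ≤ l → l ≤ k →
              (∑ i ∈ Finset.univ.filter (fun i : Fin k => (i : ℕ) < l),
                ((if b i then (1:ℝ) else 0) - p₁)) ≤ 0),
            ∏ i, (if b i then p₁ else 1 - p₁) :=
          RWQ.onedim k hk p₁ hp10 hp11 m₁ hm₁
      _ = ∑ b : Fin k → Bool, (if A₁ b then (1:ℝ) else 0) * ∏ i, (if b i then p₁ else 1 - p₁) := by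
          rw [Finset.sum_filter]
          refine Finset.sum_congr rfl fun b _ => ?_
          simp only [hA₁, ite_mul, one_mul, zero_mul]
          by_cases hcond : ∀ (l : ℕ), 1 ≤ l → l ≤ k →
            ∑ i ∈ Finset.univ.filter (fun i : Fin k => (i : ℕ) < l),
              ((if b i = true then (1:ℝ) else 0) - p₁) ≤ 0
          · rw [if_pos hcond, if_pos hcond]
          · rw [if_neg hcond, if_neg hcond]
      _ = ∑ b : Fin k → Bool, (if A₁ b then (1:ℝ) else 0) * ∏ i, (q (b i, true) + q (b i, false)) := by
          refine Finset.sum_congr rfl fun b _ => ?_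
          rw [e2]
  have hmarg2 : 1 / (2 * (k:ℝ)^2) ≤ ∑ ω : Fin k → Bool × Bool, w ω * g ω := by
    have e1 : ∑ ω : Fin k → Bool × Bool, w ω * g ω
        = ∑ ω : Fin k → Bool × Bool,
            (fun b => if A₂ b then (1:ℝ) else 0) (fun i => (ω i).2) * ∏ i, q (ω i) := by
      refine Finset.sum_congr rfl fun ω _ => ?_
      rw [hwdef, hgdef]
      dsimp only
      ring
    rw [e1, RWQ.marg_snd k q (fun b => if A₂ b then (1:ℝ) else 0)]
    have e2 : ∀ b : Fin k → Bool,
        (∏ i, (q (true, b i) + q (false, b i))) = ∏ i, (if b i then p₂ else 1 - p₂) := by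
      intro b
      refine Finset.prod_congr rfl fun i _ => ?_
      cases hb : b i <;> simp [hqdef, hb] <;> ring
    calc 1 / (2 * (k:ℝ)^2)
        ≤ ∑ b ∈ Finset.univ.filter (fun b : Fin k → Bool =>
            ∀ l, 1 ≤ l → l ≤ k →
              (∑ i ∈ Finset.univ.filter (fun i : Fin k => (i : ℕ) < l),
                ((if b i then (1:ℝ) else 0) - p₂)) ≤ 0),
            ∏ i, (if b i then p₂ else 1 - p₂) :=
          RWQ.onedim k hk p₂ hp20 hp21 m₂ hm₂
      _ = ∑ b : Fin k → Bool, (if A₂ b then (1:ℝ) else 0) * ∏ i, (if b i then p₂ else 1 - p₂) := by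
          rw [Finset.sum_filter]
          refine Finset.sum_congr rfl fun b _ => ?_
          simp only [hA₂, ite_mul, one_mul, zero_mul]
          by_cases hcond : ∀ (l : ℕ), 1 ≤ l → l ≤ k →
            ∑ i ∈ Finset.univ.filter (fun i : Fin k => (i : ℕ) < l),
              ((if b i = true then (1:ℝ) else 0) - p₂) ≤ 0
          · rw [if_pos hcond, if_pos hcond]
          · rw [if_neg hcond, if_neg hcond]
      _ = ∑ b : Fin k → Bool, (if A₂ b then (1:ℝ) else 0) *
            ∏ i, (q (true, b i) + q (false, b i)) := by
          refine Finset.sum_congr rfl fun b _ => ?_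
          rw [e2]
  -- FKG
  have hfkg' : (∑ ω : Fin k → Bool × Bool, w ω * f ω) * (∑ ω : Fin k → Bool × Bool, w ω * g ω)
      ≤ (∑ ω : Fin k → Bool × Bool, w ω)
          * ∑ ω : Fin k → Bool × Bool, w ω * (f ω * g ω) := by
    rw [hwdef]
    exact RWQ.fkg_dual k q hq0 hsup f g hf0 hg0 hfmono hgmono
  rw [htot, one_mul] at hfkg'
  -- the event
  set E : Set (Fin k → Bool × Bool) := {ω | ∀ l, 1 ≤ l → l ≤ k →
      (∑ i ∈ Finset.univ.filter (fun i : Fin k => (i : ℕ) < l),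
          ((if (ω i).1 then (1:ℝ) else 0) - p₁)) ≤ 0
    ∧ (∑ i ∈ Finset.univ.filter (fun i : Fin k => (i : ℕ) < l),
          ((if (ω i).2 then (1:ℝ) else 0) - p₂)) ≤ 0} with hE
  have hmem : ∀ ω : Fin k → Bool × Bool,
      ω ∈ E ↔ (A₁ (fun i => (ω i).1) ∧ A₂ (fun i => (ω i).2)) := by
    intro ω
    rw [hE]
    simp only [Set.mem_setOf_eq, hA₁, hA₂]
    constructor
    · intro h
      exact ⟨fun l h1 h2 => (h l h1 h2).1, fun l h1 h2 => (h l h1 h2).2⟩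
    · rintro ⟨h1, h2⟩ l hl1 hl2
      exact ⟨h1 l hl1 hl2, h2 l hl1 hl2⟩
  have hEsum : ∑ ω ∈ Finset.univ.filter (· ∈ E), ∏ i, q (ω i)
      = ∑ ω : Fin k → Bool × Bool, w ω * (f ω * g ω) := by
    rw [Finset.sum_filter]
    refine Finset.sum_congr rfl fun ω _ => ?_
    rw [hfdef, hgdef, hwdef]
    dsimp only
    by_cases h1 : A₁ (fun i => (ω i).1) <;> by_cases h2 : A₂ (fun i => (ω i).2)
    · rw [if_pos ((hmem ω).2 ⟨h1, h2⟩), if_pos h1, if_pos h2]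
      ring
    · rw [if_neg (fun hmm => h2 ((hmem ω).1 hmm).2), if_pos h1, if_neg h2]
      ring
    · rw [if_neg (fun hmm => h1 ((hmem ω).1 hmm).1), if_neg h1]
      ring
    · rw [if_neg (fun hmm => h1 ((hmem ω).1 hmm).1), if_neg h1]
      ring
  -- final numeric assembly
  have hkr : (1:ℝ) ≤ (k:ℝ) := by exact_mod_cast hk
  have h2k : (0:ℝ) < 2 * (k:ℝ)^2 := by nlinarith
  have ha : (0:ℝ) < 1 / (2 * (k:ℝ)^2) := by positivity
  have hprod : 1 / (2 * (k:ℝ)^2) * (1 / (2 * (k:ℝ)^2))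
      ≤ ∑ ω : Fin k → Bool × Bool, w ω * (f ω * g ω) := by
    have h1 : 1 / (2 * (k:ℝ)^2) * (1 / (2 * (k:ℝ)^2))
        ≤ (∑ ω : Fin k → Bool × Bool, w ω * f ω) * (∑ ω : Fin k → Bool × Bool, w ω * g ω) :=
      mul_le_mul hmarg1 hmarg2 ha.le (le_trans ha.le hmarg1)
    exact h1.trans hfkg'
  have hsq : 1 / (2 * (k:ℝ)^2) * (1 / (2 * (k:ℝ)^2)) = 1 / (4 * (k:ℝ)^4) := by
    rw [div_mul_div_comm]
    norm_num
    ring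
  have h4 : ((k:ℝ)) ^ (4:ℕ) ≤ (k:ℝ) ^ (6.5 : ℝ) := by
    rw [← Real.rpow_natCast (k:ℝ) 4]
    exact Real.rpow_le_rpow_of_exponent_le hkr (by norm_num)
  have hX0 : (0:ℝ) ≤ (k:ℝ) ^ (6.5 : ℝ) := Real.rpow_nonneg (by positivity) _
  have hd : 4 * (k:ℝ)^4 ≤ 400 * (k:ℝ) ^ (6.5 : ℝ) := by linarith [h4, hX0]
  have hk41 : (1:ℝ) ≤ (k:ℝ)^4 := one_le_pow₀ hkr
  have hpos4 : (0:ℝ) < 4 * (k:ℝ)^4 := by linarith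
  have hfin : 1 / (400 * (k:ℝ) ^ (6.5 : ℝ)) ≤ 1 / (4 * (k:ℝ)^4) :=
    one_div_le_one_div_of_le hpos4 hd
  rw [RWQ.measure_eq k μ q hq0 hqμ E]
  apply ENNReal.ofReal_le_ofReal
  have hchain : 1 / (400 * (k:ℝ) ^ (6.5 : ℝ)) ≤ ∑ ω : Fin k → Bool × Bool, w ω * (f ω * g ω) :=
    calc 1 / (400 * (k:ℝ) ^ (6.5 : ℝ)) ≤ 1 / (4 * (k:ℝ)^4) := hfin
      _ = 1 / (2 * (k:ℝ)^2) * (1 / (2 * (k:ℝ)^2)) := hsq.symm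
      _ ≤ ∑ ω : Fin k → Bool × Bool, w ω * (f ω * g ω) := hprod
  refine hchain.trans (le_of_eq ?_)
  rw [← hEsum]
  congr
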